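/- Let m ≥ 1, δ > 0, and let M be an m×m real symmetric positive definite matrix. Define φ(t) = δt·I + t²·(M − δ·I) for t ∈ [0,1] and k(t) = 2(M − δ·I)·(δ·I + t(M − δ·I))⁻¹ for t ∈ (0,1]. Then: (i) for every t ∈ (0,1], δ·I + t(M − δ·I) is positive definite (hence invertible) and φ(t) is positive definite; (ii) k(t) is symmetric and satisfies k(t)·φ(t) + φ(t)·k(t) = 2(φ'(t) − δ·I), where φ'(t) = δ·I + 2t·(M − δ·I); (iii) (1/8)∫₀¹ Tr(k(t)·φ(t)·k(t)) dt = (1/2)Tr(M) − (δ/2)·log det(M) − mδ/2 + (mδ/2)·log δ. -/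

import Mathlib

open Matrix

private lemma stmt12_denom_pos {δ a t : ℝ} (hδ : 0 < δ) (hpos : 0 < δ + a)
    (ht : t ∈ Set.uIcc (0:ℝ) 1) : 0 < δ + t * a := by
  rw [Set.uIcc_of_le zero_le_one] at ht
  have h1 : δ + t * a = (1 - t) * δ + t * (δ + a) := by ring
  rw [h1]
  have h2 := ht.1
  have h3 : 0 ≤ 1 - t := by linarith [ht.2]
  have := mul_nonneg h3 hδ.le
  have := mul_nonneg h2 hpos.le
  rcases eq_or_lt_of_le h2 with h | h
  · rw [← h]; simpa using hδ
  · have := mul_pos h hpos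
    linarith

private lemma stmt12_integrable {δ a : ℝ} (hδ : 0 < δ) (hpos : 0 < δ + a) :
    IntervalIntegrable (fun t => 4 * t * a ^ 2 / (δ + t * a))
      MeasureTheory.volume 0 1 := by
  apply ContinuousOn.intervalIntegrable
  apply ContinuousOn.div
  · fun_prop
  · fun_prop
  · exact fun t ht => (stmt12_denom_pos hδ hpos ht).ne'

private lemma stmt12_scalar_int {δ a : ℝ} (hδ : 0 < δ) (hpos : 0 < δ + a) :
    ∫ t in (0:ℝ)..1, 4 * t * a ^ 2 / (δ + t * a)
      = 4 * a - 4 * δ * (Real.log (δ + a) - Real.log δ) := by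
  have key : ∀ t ∈ Set.uIcc (0:ℝ) 1,
      HasDerivAt (fun t => 4 * a * t - 4 * δ * Real.log (δ + t * a))
        (4 * t * a ^ 2 / (δ + t * a)) t := by
    intro t ht
    have hd := stmt12_denom_pos hδ hpos ht
    have h1 : HasDerivAt (fun t : ℝ => δ + t * a) a t := by
      simpa using ((hasDerivAt_id t).mul_const a).const_add δ
    have h2 : HasDerivAt (fun t : ℝ => Real.log (δ + t * a)) (a / (δ + t * a)) t :=
      h1.log hd.ne'
    have h3 : HasDerivAt (fun t : ℝ => 4 * a * t - 4 * δ * Real.log (δ + t * a))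
        (4 * a * 1 - 4 * δ * (a / (δ + t * a))) t :=
      ((hasDerivAt_id t).const_mul (4 * a)).sub (h2.const_mul (4 * δ))
    convert h3 using 1
    field_simp
    ring
  rw [intervalIntegral.integral_eq_sub_of_hasDerivAt key (stmt12_integrable hδ hpos)]
  simp only [mul_one, one_mul, zero_mul, mul_zero, add_zero]
  ring

private lemma stmt12_posdef_smul {m : ℕ} {M : Matrix (Fin m) (Fin m) ℝ} (hM : M.PosDef)
    {c : ℝ} (hc : 0 < c) : (c • M).PosDef := by
  refine ⟨?_, fun x hx => ?_⟩
  · unfold Matrix.IsHermitian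
    rw [conjTranspose_smul, hM.1]
    simp
  · exact (hM.smul hc).2 hx

private lemma stmt12_possemidef_smul {m : ℕ} {M : Matrix (Fin m) (Fin m) ℝ}
    (hM : M.PosSemidef) {c : ℝ} (hc : 0 ≤ c) : (c • M).PosSemidef := by
  refine ⟨?_, fun x => ?_⟩
  · unfold Matrix.IsHermitian
    rw [conjTranspose_smul, hM.1]
    simp
  · exact (hM.smul hc).2 x

theorem stmt_12 (m : ℕ) (hm : 1 ≤ m) (δ : ℝ) (hδ : 0 < δ)
    (M : Matrix (Fin m) (Fin m) ℝ) (hM : M.PosDef)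
    (φ φ' k : ℝ → Matrix (Fin m) (Fin m) ℝ)
    (hφ : ∀ t : ℝ, φ t = (δ * t) • (1 : Matrix (Fin m) (Fin m) ℝ)
        + (t ^ 2) • (M - δ • (1 : Matrix (Fin m) (Fin m) ℝ)))
    (hφ' : ∀ t : ℝ, φ' t = δ • (1 : Matrix (Fin m) (Fin m) ℝ)
        + (2 * t) • (M - δ • (1 : Matrix (Fin m) (Fin m) ℝ)))
    (hk : ∀ t : ℝ, k t = (2:ℝ) • ((M - δ • (1 : Matrix (Fin m) (Fin m) ℝ))
        * (δ • (1 : Matrix (Fin m) (Fin m) ℝ)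
            + t • (M - δ • (1 : Matrix (Fin m) (Fin m) ℝ)))⁻¹)) :
    (∀ t ∈ Set.Ioc (0:ℝ) 1,
      (δ • (1 : Matrix (Fin m) (Fin m) ℝ)
          + t • (M - δ • (1 : Matrix (Fin m) (Fin m) ℝ))).PosDef ∧
      IsUnit (δ • (1 : Matrix (Fin m) (Fin m) ℝ)
          + t • (M - δ • (1 : Matrix (Fin m) (Fin m) ℝ))) ∧
      (φ t).PosDef) ∧
    (∀ t ∈ Set.Ioc (0:ℝ) 1,
      (k t).IsSymm ∧
      k t * φ t + φ t * k t
        = (2:ℝ) • (φ' t - δ • (1 : Matrix (Fin m) (Fin m) ℝ))) ∧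
    (1 / 8 : ℝ) * (∫ t in (0:ℝ)..1, (k t * φ t * k t).trace)
      = (1 / 2) * M.trace - (δ / 2) * Real.log M.det - m * δ / 2
          + (m * δ / 2) * Real.log δ := by
  have hH := hM.1
  set μ : Fin m → ℝ := hH.eigenvalues with hμdef
  have hμpos : ∀ i, 0 < μ i := fun i => hM.eigenvalues_pos i
  set U : Matrix (Fin m) (Fin m) ℝ := (hH.eigenvectorUnitary : Matrix (Fin m) (Fin m) ℝ)
    with hUdef
  have h1 : U * Uᴴ = 1 := by
    have := (Matrix.mem_unitaryGroup_iff).mp hH.eigenvectorUnitary.2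
    simpa [star_eq_conjTranspose] using this
  have h2 : Uᴴ * U = 1 := by
    have := (Matrix.mem_unitaryGroup_iff').mp hH.eigenvectorUnitary.2
    simpa [star_eq_conjTranspose] using this
  set conj : (Fin m → ℝ) → Matrix (Fin m) (Fin m) ℝ :=
    fun f => U * diagonal f * Uᴴ with hconjdef
  have hMU : M = conj μ := by
    have hs := hH.spectral_theorem
    simpa [hconjdef, star_eq_conjTranspose, Function.comp] using hs
  have hcancel : ∀ X : Matrix (Fin m) (Fin m) ℝ, Uᴴ * (U * X) = X := fun X => by
    rw [← Matrix.mul_assoc, h2, Matrix.one_mul]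
  have hconj_mul : ∀ f g : Fin m → ℝ, conj f * conj g = conj (fun i => f i * g i) := by
    intro f g
    simp only [hconjdef, Matrix.mul_assoc]
    rw [hcancel, ← Matrix.mul_assoc (diagonal f) (diagonal g), diagonal_mul_diagonal]
  have hconj_add : ∀ f g : Fin m → ℝ, conj f + conj g = conj (fun i => f i + g i) := by
    intro f g
    simp only [hconjdef]
    rw [← Matrix.add_mul, ← Matrix.mul_add, diagonal_add]
  have hconj_sub : ∀ f g : Fin m → ℝ, conj f - conj g = conj (fun i => f i - g i) := by
    intro f g
    simp only [hconjdef]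
    rw [← Matrix.sub_mul, ← Matrix.mul_sub, diagonal_sub]
  have hconj_smul : ∀ (c : ℝ) (f : Fin m → ℝ), c • conj f = conj (fun i => c * f i) := by
    intro c f
    simp only [hconjdef]
    rw [show (fun i => c * f i) = c • f from rfl, diagonal_smul, Matrix.mul_smul,
      Matrix.smul_mul]
  have hconj_congr : ∀ f g : Fin m → ℝ, (∀ i, f i = g i) → conj f = conj g := by
    intro f g h
    have : f = g := funext h
    rw [this]
  have hconj_one : conj (fun _ => (1:ℝ)) = 1 := by
    simp only [hconjdef]
    rw [show (diagonal fun _ : Fin m => (1:ℝ)) = 1 from diagonal_one, Matrix.mul_one, h1]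
  have hsmul1 : ∀ c : ℝ, c • (1 : Matrix (Fin m) (Fin m) ℝ) = conj (fun _ => c) := by
    intro c
    rw [← hconj_one, hconj_smul]
    simp
  have hδ1 : δ • (1 : Matrix (Fin m) (Fin m) ℝ) = conj (fun _ => δ) := hsmul1 δ
  have hA : M - δ • (1 : Matrix (Fin m) (Fin m) ℝ) = conj (fun i => μ i - δ) := by
    rw [hMU, hδ1, hconj_sub]
  have hB : ∀ t : ℝ, δ • (1 : Matrix (Fin m) (Fin m) ℝ)
      + t • (M - δ • (1 : Matrix (Fin m) (Fin m) ℝ))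
      = conj (fun i => δ + t * (μ i - δ)) := by
    intro t
    rw [hA, hδ1, hconj_smul, hconj_add]
  have hdpos : ∀ t ∈ Set.uIcc (0:ℝ) 1, ∀ i, 0 < δ + t * (μ i - δ) := by
    intro t ht i
    have : (0:ℝ) < δ + (μ i - δ) := by have := hμpos i; linarith
    exact stmt12_denom_pos hδ this ht
  have hBinv : ∀ t ∈ Set.uIcc (0:ℝ) 1,
      (δ • (1 : Matrix (Fin m) (Fin m) ℝ)
        + t • (M - δ • (1 : Matrix (Fin m) (Fin m) ℝ)))⁻¹
      = conj (fun i => (δ + t * (μ i - δ))⁻¹) := by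
    intro t ht
    rw [hB t]
    apply Matrix.inv_eq_right_inv
    rw [hconj_mul, ← hconj_one]
    exact hconj_congr _ _ fun i => mul_inv_cancel₀ (hdpos t ht i).ne'
  have hkc : ∀ t ∈ Set.uIcc (0:ℝ) 1,
      k t = conj (fun i => 2 * ((μ i - δ) * (δ + t * (μ i - δ))⁻¹)) := by
    intro t ht
    rw [hk t, hBinv t ht, hA, hconj_mul, hconj_smul]
  have hφc : ∀ t : ℝ, φ t = conj (fun i => δ * t + t ^ 2 * (μ i - δ)) := by
    intro t
    rw [hφ t, hA, hsmul1 (δ * t), hconj_smul, hconj_add]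
  have hconj_trace : ∀ f : Fin m → ℝ, (conj f).trace = ∑ i, f i := by
    intro f
    simp only [hconjdef]
    rw [Matrix.trace_mul_cycle, h2, Matrix.one_mul, trace_diagonal]
  -- Part (i)
  have hIoc_sub : ∀ t ∈ Set.Ioc (0:ℝ) 1, t ∈ Set.uIcc (0:ℝ) 1 := by
    intro t ht
    rw [Set.uIcc_of_le zero_le_one]
    exact ⟨ht.1.le, ht.2⟩
  have part1 : ∀ t ∈ Set.Ioc (0:ℝ) 1,
      (δ • (1 : Matrix (Fin m) (Fin m) ℝ)
          + t • (M - δ • (1 : Matrix (Fin m) (Fin m) ℝ))).PosDef ∧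
      IsUnit (δ • (1 : Matrix (Fin m) (Fin m) ℝ)
          + t • (M - δ • (1 : Matrix (Fin m) (Fin m) ℝ))) ∧
      (φ t).PosDef := by
    intro t ht
    have hBpd : (δ • (1 : Matrix (Fin m) (Fin m) ℝ)
        + t • (M - δ • (1 : Matrix (Fin m) (Fin m) ℝ))).PosDef := by
      have hrw : δ • (1 : Matrix (Fin m) (Fin m) ℝ)
          + t • (M - δ • (1 : Matrix (Fin m) (Fin m) ℝ))
          = ((1 - t) * δ) • (1 : Matrix (Fin m) (Fin m) ℝ) + t • M := by
        module
      rw [hrw]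
      have hsemi : (((1 - t) * δ) • (1 : Matrix (Fin m) (Fin m) ℝ)).PosSemidef :=
        stmt12_possemidef_smul Matrix.PosDef.one.posSemidef
          (mul_nonneg (by linarith [ht.2]) hδ.le)
      exact Matrix.PosDef.posSemidef_add hsemi (stmt12_posdef_smul hM ht.1)
    refine ⟨hBpd, hBpd.isUnit, ?_⟩
    have hrw : φ t = t • (δ • (1 : Matrix (Fin m) (Fin m) ℝ)
        + t • (M - δ • (1 : Matrix (Fin m) (Fin m) ℝ))) := by
      rw [hφ t]; module
    rw [hrw]
    exact stmt12_posdef_smul hBpd ht.1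
  -- Part (ii)
  have hconj_symm : ∀ f : Fin m → ℝ, (conj f).IsSymm := by
    intro f
    have hherm : (conj f).IsHermitian := by
      unfold Matrix.IsHermitian
      simp only [hconjdef]
      rw [conjTranspose_mul, conjTranspose_mul, conjTranspose_conjTranspose,
        diagonal_conjTranspose]
      have : star f = f := by
        funext i; simp
      rw [this, Matrix.mul_assoc]
    rw [Matrix.IsSymm, ← Matrix.conjTranspose_eq_transpose_of_trivial, hherm]
  have part2 : ∀ t ∈ Set.Ioc (0:ℝ) 1,
      (k t).IsSymm ∧
      k t * φ t + φ t * k t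
        = (2:ℝ) • (φ' t - δ • (1 : Matrix (Fin m) (Fin m) ℝ)) := by
    intro t ht
    have htu := hIoc_sub t ht
    constructor
    · rw [hkc t htu]; exact hconj_symm _
    · have hrhs : φ' t - δ • (1 : Matrix (Fin m) (Fin m) ℝ)
          = conj (fun i => 2 * t * (μ i - δ)) := by
        rw [hφ' t, hA, hδ1, hconj_smul, hconj_add, hconj_sub]
        exact hconj_congr _ _ fun i => by ring
      rw [hkc t htu, hφc t, hrhs, hconj_mul, hconj_mul, hconj_add, hconj_smul]
      refine hconj_congr _ _ fun i => ?_
      have hd := hdpos t htu i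
      field_simp
      rw [div_eq_iff (by rw [mul_comm]; exact hd.ne')]
      ring
  refine ⟨part1, part2, ?_⟩
  -- Part (iii)
  have htrace : ∀ t ∈ Set.uIcc (0:ℝ) 1,
      (k t * φ t * k t).trace = ∑ i, 4 * t * (μ i - δ) ^ 2 / (δ + t * (μ i - δ)) := by
    intro t ht
    rw [hkc t ht, hφc t, hconj_mul, hconj_mul, hconj_trace]
    refine Finset.sum_congr rfl fun i _ => ?_
    have hd := hdpos t ht i
    field_simp
    ring
  have hint_eq : (∫ t in (0:ℝ)..1, (k t * φ t * k t).trace)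
      = ∫ t in (0:ℝ)..1, ∑ i, 4 * t * (μ i - δ) ^ 2 / (δ + t * (μ i - δ)) := by
    apply intervalIntegral.integral_congr
    intro t ht
    exact htrace t ht
  have hμδ : ∀ i : Fin m, (0:ℝ) < δ + (μ i - δ) := by
    intro i; have := hμpos i; linarith
  have hsum_int : (∫ t in (0:ℝ)..1, ∑ i, 4 * t * (μ i - δ) ^ 2 / (δ + t * (μ i - δ)))
      = ∑ i, (4 * (μ i - δ) - 4 * δ * (Real.log (δ + (μ i - δ)) - Real.log δ)) := by
    rw [intervalIntegral.integral_finset_sum]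
    · exact Finset.sum_congr rfl fun i _ => stmt12_scalar_int hδ (hμδ i)
    · exact fun i _ => stmt12_integrable hδ (hμδ i)
  have htrM : M.trace = ∑ i, μ i := by rw [hMU, hconj_trace]
  have hdetM : Real.log M.det = ∑ i, Real.log (μ i) := by
    have : M.det = ∏ i, μ i := by
      have := hH.det_eq_prod_eigenvalues
      simpa using this
    rw [this, Real.log_prod fun i _ => (hμpos i).ne']
  rw [hint_eq, hsum_int]
  have hexp : ∑ i, (4 * (μ i - δ) - 4 * δ * (Real.log (δ + (μ i - δ)) - Real.log δ))
      = 4 * (∑ i, μ i) - 4 * m * δ - 4 * δ * (∑ i, Real.log (μ i))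
        + 4 * m * δ * Real.log δ := by
    have hlog : ∀ i : Fin m, Real.log (δ + (μ i - δ)) = Real.log (μ i) := by
      intro i; congr 1; ring
    simp only [hlog]
    rw [Finset.sum_sub_distrib]
    have e1 : ∑ i : Fin m, 4 * (μ i - δ) = 4 * (∑ i, μ i) - 4 * m * δ := by
      rw [← Finset.mul_sum, Finset.sum_sub_distrib, Finset.sum_const, Finset.card_univ,
        Fintype.card_fin, nsmul_eq_mul]
      ring
    have e2 : ∑ i : Fin m, 4 * δ * (Real.log (μ i) - Real.log δ)
        = 4 * δ * (∑ i, Real.log (μ i)) - 4 * m * δ * Real.log δ := by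
      rw [← Finset.mul_sum, Finset.sum_sub_distrib, Finset.sum_const, Finset.card_univ,
        Fintype.card_fin, nsmul_eq_mul]
      ring
    rw [e1, e2]
    ring
  rw [hexp, htrM, hdetM]
  push_cast
  ring
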